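/- Assume the Chang Conjecture (ω₂,ω₁) ↠ (ω₁,ω). Then there is no sequence ⟨f_α : α < ω₂⟩ of functions f_α : ω₁ → ω₁ which is increasing modulo finite, i.e. such that for all α < β < ω₂ the set {ξ < ω₁ : f_α(ξ) ≥ f_β(ξ)} is finite. -/

import Mathlib

open Cardinal Set

def IsClubIn (C : Set Ordinal) (δ : Ordinal) : Prop :=
  (∀ x ∈ C, x < δ) ∧ (∀ x < δ, ∃ y ∈ C, x ≤ y) ∧
  (∀ x, x < δ → x ≠ 0 → (∀ y < x, ∃ z ∈ C, y < z ∧ z < x) → x ∈ C)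

def HasOrderType (X : Set Ordinal) (α : Ordinal) : Prop :=
  ∃ g : Ordinal → Ordinal, StrictMonoOn g (Set.Iio α) ∧ X = g '' Set.Iio α

/-! ### Auxiliary universe-transfer machinery -/

theorem chLiftAleph2.{u, v} :
    Ordinal.lift.{v} ((aleph 2).ord : Ordinal.{u}) = (aleph 2).ord := by
  simp [Cardinal.lift_ord, lift_aleph]

theorem chLiftAleph1.{u, v} :
    Ordinal.lift.{v} ((aleph 1).ord : Ordinal.{u}) = (aleph 1).ord := by
  simp [Cardinal.lift_ord, lift_aleph]

theorem chOmega1LtOmega2.{u} : ((aleph 1).ord : Ordinal.{u}) < (aleph 2).ord :=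
  Cardinal.ord_lt_ord.2 (aleph_lt_aleph.2 one_lt_two)

-- Transfer of (small enough) ordinals between universes.
open Classical in
noncomputable def chTr.{u, v} : Ordinal.{u} → Ordinal.{v} :=
  fun a =>
    if h : ∃ b : Ordinal.{v}, Ordinal.lift.{max u v} b = Ordinal.lift.{max u v} a then
      h.choose
    else 0

theorem chTr_lift.{u, v} {a : Ordinal.{u}} (h : a < (aleph 2).ord) :
    Ordinal.lift.{max u v} (chTr.{u, v} a) = Ordinal.lift.{max u v} a := by
  have hex : ∃ b : Ordinal.{v}, Ordinal.lift.{max u v} b = Ordinal.lift.{max u v} a := by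
    have hle : Ordinal.lift.{max u v} a ≤
        Ordinal.lift.{max u v} ((aleph 2).ord : Ordinal.{v}) := by
      rw [chLiftAleph2.{v, max u v}, ← chLiftAleph2.{u, max u v}]
      exact le_of_lt (Ordinal.lift_lt.2 h)
    exact Ordinal.mem_range_lift_of_le hle
  rw [chTr, dif_pos hex]
  exact hex.choose_spec

theorem chTr_lt_omega2.{u, v} {a : Ordinal.{u}} (h : a < (aleph 2).ord) :
    chTr.{u, v} a < (aleph 2).ord := by
  refine (Ordinal.lift_lt.{max u v, v}).1 ?_
  rw [chTr_lift.{u, v} h, chLiftAleph2.{v, max u v}, ← chLiftAleph2.{u, max u v}]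
  exact Ordinal.lift_lt.2 h

theorem chTr_lt_omega1_iff.{u, v} {a : Ordinal.{u}} (h : a < (aleph 2).ord) :
    chTr.{u, v} a < (aleph 1).ord ↔ a < (aleph 1).ord := by
  rw [← Ordinal.lift_lt.{max u v, v} (a := chTr.{u, v} a),
    chTr_lift.{u, v} h, chLiftAleph1.{v, max u v}, ← chLiftAleph1.{u, max u v},
    Ordinal.lift_lt]

theorem chTr_lt_chTr.{u, v} {a b : Ordinal.{u}} (ha : a < (aleph 2).ord)
    (hb : b < (aleph 2).ord) : chTr.{u, v} a < chTr.{u, v} b ↔ a < b := by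
  rw [← Ordinal.lift_lt.{max u v, v} (a := chTr.{u, v} a),
    chTr_lift.{u, v} ha, chTr_lift.{u, v} hb, Ordinal.lift_lt]

theorem chTr_le_chTr.{u, v} {a b : Ordinal.{u}} (ha : a < (aleph 2).ord)
    (hb : b < (aleph 2).ord) : chTr.{u, v} a ≤ chTr.{u, v} b ↔ a ≤ b := by
  rw [← Ordinal.lift_le.{max u v, v} (a := chTr.{u, v} a),
    chTr_lift.{u, v} ha, chTr_lift.{u, v} hb, Ordinal.lift_le]

theorem chTr_chTr.{u, v} {a : Ordinal.{u}} (h : a < (aleph 2).ord) :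
    chTr.{v, u} (chTr.{u, v} a) = a := by
  have h1 := chTr_lift.{u, v} h
  have h2 := chTr_lift.{v, u} (a := chTr.{u, v} a) (chTr_lt_omega2.{u, v} h)
  refine (Ordinal.lift_inj.{max u v, u}).1 ?_
  rw [h2, h1]

/-- The single-universe core of the argument. -/
theorem chCore.{w}
    (hCC : ∀ c : Ordinal.{w} → Ordinal.{w} → Ordinal.{w},
      (∀ α β, α < (aleph 2).ord → β < (aleph 2).ord → α < β → c α β < (aleph 1).ord) →
      ∃ S ⊆ Set.Iio ((aleph 2).ord : Ordinal.{w}),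
        (∃ g : Ordinal.{w} → Ordinal.{w},
          StrictMonoOn g (Set.Iio ((aleph 1).ord : Ordinal.{w})) ∧
          S = g '' Set.Iio ((aleph 1).ord : Ordinal.{w})) ∧
        ∃ ξ < ((aleph 1).ord : Ordinal.{w}),
          ∀ α β, α ∈ S → β ∈ S → α < β → c α β < ξ) :
    ¬ ∃ f : Ordinal.{w} → Ordinal.{w} → Ordinal.{w},
      (∀ α, α < (aleph 2).ord → ∀ ξ < (aleph 1).ord, f α ξ < (aleph 1).ord) ∧
      (∀ α β, α < β → β < (aleph 2).ord →
        {ξ | ξ < (aleph 1).ord ∧ f β ξ ≤ f α ξ}.Finite) := by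
  rintro ⟨f, hval, hfin⟩
  have hω₁lim : Order.IsSuccLimit ((aleph 1).ord : Ordinal.{w}) :=
    isSuccLimit_ord (aleph0_le_aleph 1)
  -- the bad sets
  set bad : Ordinal.{w} → Ordinal.{w} → Set Ordinal.{w} :=
    fun α β => {ξ | ξ < (aleph 1).ord ∧ f β ξ ≤ f α ξ} with hbad
  -- the coloring
  set c : Ordinal.{w} → Ordinal.{w} → Ordinal.{w} :=
    fun α β => sSup ((· + 1) '' bad α β) with hc
  have hcbound : ∀ α β, α < (aleph 2).ord → β < (aleph 2).ord → α < β →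
      c α β < (aleph 1).ord := by
    intro α β hα hβ hαβ
    have hf : ((· + 1) '' bad α β).Finite := (hfin α β hαβ hβ).image _
    rcases ((· + 1) '' bad α β).eq_empty_or_nonempty with he | hne
    · rw [hc]; simp only [he, csSup_empty]
      exact hω₁lim.pos
    · have := hne.csSup_mem hf
      rcases this with ⟨ξ, hξ, hξ'⟩
      rw [hc]; dsimp only; rw [← hξ']
      show ξ + 1 < (aleph 1).ord
      rw [Ordinal.add_one_eq_succ]
      exact hω₁lim.succ_lt hξ.1
  -- the coloring bounds the bad sets
  have hcbad : ∀ α β, α < β → β < (aleph 2).ord → ∀ ξ ∈ bad α β, ξ < c α β := by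
    intro α β hαβ hβ ξ hξ
    have hf : ((· + 1) '' bad α β).Finite := (hfin α β hαβ hβ).image _
    have h1 : ξ + 1 ≤ c α β := le_csSup hf.bddAbove ⟨ξ, hξ, rfl⟩
    calc ξ < ξ + 1 := by rw [Ordinal.add_one_eq_succ]; exact Order.lt_succ ξ
    _ ≤ c α β := h1
  obtain ⟨S, hSC, ⟨g, hg, hgS⟩, ξ₁, hξ₁, hbound⟩ := hCC c hcbound
  -- membership facts
  have hgmem : ∀ i, i < (aleph 1).ord → g i < (aleph 2).ord :=
    fun i hi => hSC (hgS ▸ ⟨i, hi, rfl⟩)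
  -- strict increase above ξ₁ along the chain
  have hstep : ∀ i j, i < j → j < (aleph 1).ord →
      ∀ ξ, ξ₁ ≤ ξ → ξ < (aleph 1).ord → f (g i) ξ < f (g j) ξ := by
    intro i j hij hj ξ hξ₁ξ hξ
    have hi : i < (aleph 1).ord := hij.trans hj
    have hgij : g i < g j := hg hi hj hij
    have hcb : c (g i) (g j) < ξ₁ :=
      hbound _ _ (hgS ▸ ⟨i, hi, rfl⟩) (hgS ▸ ⟨j, hj, rfl⟩) hgij
    by_contra hle
    push_neg at hle
    have hmem : ξ ∈ bad (g i) (g j) := ⟨hξ, hle⟩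
    have := hcbad _ _ hgij (hgmem j hj) ξ hmem
    exact absurd ((this.trans hcb).trans_le hξ₁ξ) (lt_irrefl ξ)
  -- i ≤ f (g i) ξ for ξ ∈ [ξ₁, ω₁)
  have hkey : ∀ i, i < (aleph 1).ord → ∀ ξ, ξ₁ ≤ ξ → ξ < (aleph 1).ord → i ≤ f (g i) ξ := by
    intro i
    induction i using Ordinal.induction with
    | h i IH =>
      intro hi ξ hξ₁ξ hξ
      by_contra hlt
      push_neg at hlt
      have h1 : f (g i) ξ < i := hlt
      have h2 : f (g i) ξ ≤ f (g (f (g i) ξ)) ξ := IH _ h1 (h1.trans hi) ξ hξ₁ξ hξ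
      have h3 : f (g (f (g i) ξ)) ξ < f (g i) ξ := hstep _ _ h1 hi ξ hξ₁ξ hξ
      exact absurd (h2.trans_lt h3) (lt_irrefl _)
  -- cofinality of ω₂
  have hcof : ((aleph 2).ord : Ordinal.{w}).cof = aleph 2 := by
    have h2 : (2 : Ordinal.{w}) = Order.succ 1 := by
      rw [← Ordinal.add_one_eq_succ]; norm_num
    rw [h2]
    exact (isRegular_aleph_succ 1).cof_eq
  -- the supremum of the chain
  set β' : Ordinal.{w} := Ordinal.bsup (aleph 1).ord (fun a _ => g a) with hβ'
  have hβ'lt : β' < (aleph 2).ord := by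
    rw [hβ']
    apply Ordinal.bsup_lt_ord _ (fun i hi => hgmem i hi)
    rw [card_ord, hcof]
    exact aleph_lt_aleph.2 one_lt_two
  have hgβ' : ∀ i, i < (aleph 1).ord → g i < β' := by
    intro i hi
    have hsi : i + 1 < (aleph 1).ord := by
      rw [Ordinal.add_one_eq_succ]; exact hω₁lim.succ_lt hi
    calc g i < g (i + 1) := hg hi hsi (by rw [Ordinal.add_one_eq_succ]; exact Order.lt_succ i)
    _ ≤ β' := Ordinal.le_bsup _ _ hsi
  -- ξ₁ + n is a valid coordinate
  have hξn : ∀ n : ℕ, ξ₁ + (n : Ordinal) < (aleph 1).ord := by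
    intro n
    rw [Cardinal.lt_ord, Ordinal.card_add, Ordinal.card_nat]
    exact Cardinal.add_lt_of_lt (aleph0_le_aleph 1) (Cardinal.lt_ord.1 hξ₁)
      ((Cardinal.nat_lt_aleph0 n).trans aleph0_lt_aleph_one)
  -- the countable supremum
  set i' : Ordinal.{w} := ⨆ n : ℕ, (f β' (ξ₁ + (n : Ordinal)) + 1) with hi'
  have hi'lt : i' < (aleph 1).ord := by
    rw [hi']
    apply Ordinal.iSup_lt_ord_lift
    · rw [(isRegular_aleph_one).cof_eq]
      have hℕ : Cardinal.lift.{w} #ℕ = ℵ₀ := by simp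
      rw [hℕ]
      exact aleph0_lt_aleph_one
    · intro n
      rw [Ordinal.add_one_eq_succ]
      exact hω₁lim.succ_lt (hval β' hβ'lt _ (hξn n))
  have hmem : ∀ n : ℕ, ξ₁ + (n : Ordinal) ∈ bad (g i') β' := by
    intro n
    refine ⟨hξn n, ?_⟩
    have h1 : f β' (ξ₁ + (n : Ordinal)) < f β' (ξ₁ + (n : Ordinal)) + 1 := by
      rw [Ordinal.add_one_eq_succ]; exact Order.lt_succ _
    have h2 : f β' (ξ₁ + (n : Ordinal)) + 1 ≤ i' :=
      le_ciSup (Ordinal.bddAbove_range _) n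
    have h3 : i' ≤ f (g i') (ξ₁ + (n : Ordinal)) :=
      hkey i' hi'lt _ le_self_add (hξn n)
    exact ((h1.trans_le h2).trans_le h3).le
  have hbadfin : (bad (g i') β').Finite :=
    hfin _ _ (hgβ' i' hi'lt) hβ'lt
  have hinj : Function.Injective (fun n : ℕ => ξ₁ + (n : Ordinal.{w})) := by
    intro n m h
    have := (add_right_inj ξ₁).1 h
    exact_mod_cast this
  exact (Set.infinite_of_injective_forall_mem hinj hmem) hbadfin

/-- The multi-universe glue. -/
theorem chGlue.{u1, u2, u3, u4, u5, u6}
    (hCC : ∀ C : Set Ordinal.{u1}, IsClubIn C (aleph 2).ord →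
      ∀ c : Ordinal.{u1} → Ordinal.{u1} → Ordinal.{u2},
        (∀ α β, α ∈ C → β ∈ C → α < β → c α β < (aleph 1).ord) →
        ∃ S ⊆ C, HasOrderType.{u1, u3} S (aleph 1).ord ∧
          ∃ ξ < ((aleph 1).ord : Ordinal.{u2}), ∀ α β, α ∈ S → β ∈ S → α < β → c α β < ξ) :
    ¬ ∃ f : Ordinal.{u4} → Ordinal.{u5} → Ordinal.{u6},
      (∀ α, α < (aleph 2).ord → ∀ ξ < (aleph 1).ord, f α ξ < (aleph 1).ord) ∧
      (∀ α β, α < β → β < (aleph 2).ord →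
        {ξ | ξ < (aleph 1).ord ∧ f β ξ ≤ f α ξ}.Finite) := by
  rintro ⟨f, hval, hfin⟩
  -- transfer hCC to the single-universe form needed by `chCore`
  have hCC' : ∀ c' : Ordinal.{u1} → Ordinal.{u1} → Ordinal.{u1},
      (∀ α β, α < (aleph 2).ord → β < (aleph 2).ord → α < β → c' α β < (aleph 1).ord) →
      ∃ S ⊆ Set.Iio ((aleph 2).ord : Ordinal.{u1}),
        (∃ g : Ordinal.{u1} → Ordinal.{u1},
          StrictMonoOn g (Set.Iio ((aleph 1).ord : Ordinal.{u1})) ∧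
          S = g '' Set.Iio ((aleph 1).ord : Ordinal.{u1})) ∧
        ∃ ξ < ((aleph 1).ord : Ordinal.{u1}),
          ∀ α β, α ∈ S → β ∈ S → α < β → c' α β < ξ := by
    intro c' hc'
    have hclub : IsClubIn (Set.Iio ((aleph 2).ord : Ordinal.{u1})) (aleph 2).ord :=
      ⟨fun x hx => hx, fun x hx => ⟨x, hx, le_rfl⟩, fun x hx _ _ => hx⟩
    obtain ⟨S, hSC, ⟨g, hg, hgS⟩, ξ, hξ, hb⟩ := hCC _ hclub
      (fun α β => chTr.{u1, u2} (c' α β))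
      (fun α β hα hβ hαβ =>
        (chTr_lt_omega1_iff.{u1, u2} ((hc' α β hα hβ hαβ).trans chOmega1LtOmega2)).2
          (hc' α β hα hβ hαβ))
    refine ⟨S, hSC, ⟨fun i => g (chTr.{u1, u3} i), ?_, ?_⟩, chTr.{u2, u1} ξ, ?_, ?_⟩
    · -- strict monotonicity of the recoordinatized enumeration
      intro i hi j hj hij
      have hi2 : i < (aleph 2).ord := lt_trans hi chOmega1LtOmega2
      have hj2 : j < (aleph 2).ord := lt_trans hj chOmega1LtOmega2
      exact hg ((chTr_lt_omega1_iff.{u1, u3} hi2).2 hi)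
        ((chTr_lt_omega1_iff.{u1, u3} hj2).2 hj) ((chTr_lt_chTr.{u1, u3} hi2 hj2).2 hij)
    · -- the image is unchanged
      rw [hgS]
      ext x
      constructor
      · rintro ⟨i, hi, rfl⟩
        have hi2 : i < (aleph 2).ord := lt_trans hi chOmega1LtOmega2
        refine ⟨chTr.{u3, u1} i, (chTr_lt_omega1_iff.{u3, u1} hi2).2 hi, ?_⟩
        show g (chTr.{u1, u3} (chTr.{u3, u1} i)) = g i
        rw [chTr_chTr.{u3, u1} hi2]
      · rintro ⟨i, hi, rfl⟩
        have hi2 : i < (aleph 2).ord := lt_trans hi chOmega1LtOmega2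
        exact ⟨chTr.{u1, u3} i, (chTr_lt_omega1_iff.{u1, u3} hi2).2 hi, rfl⟩
    · exact (chTr_lt_omega1_iff.{u2, u1} (hξ.trans chOmega1LtOmega2)).2 hξ
    · intro α β hα hβ hαβ
      have h1 : c' α β < (aleph 1).ord := hc' α β (hSC hα) (hSC hβ) hαβ
      have h1' : c' α β < (aleph 2).ord := h1.trans chOmega1LtOmega2
      have h2 : chTr.{u1, u2} (c' α β) < ξ := hb α β hα hβ hαβ
      have h4 : chTr.{u2, u1} (chTr.{u1, u2} (c' α β)) < chTr.{u2, u1} ξ :=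
        (chTr_lt_chTr.{u2, u1} (chTr_lt_omega2.{u1, u2} h1')
          (hξ.trans chOmega1LtOmega2)).2 h2
      rwa [chTr_chTr.{u1, u2} h1'] at h4
  -- transfer f to the single universe
  refine chCore.{u1} hCC'
    ⟨fun α ξ => chTr.{u6, u1} (f (chTr.{u1, u4} α) (chTr.{u1, u5} ξ)), ?_, ?_⟩
  · intro α hα ξ hξ
    have hv : f (chTr.{u1, u4} α) (chTr.{u1, u5} ξ) < (aleph 1).ord :=
      hval _ (chTr_lt_omega2.{u1, u4} hα) _
        ((chTr_lt_omega1_iff.{u1, u5} (hξ.trans chOmega1LtOmega2)).2 hξ)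
    exact (chTr_lt_omega1_iff.{u6, u1} (hv.trans chOmega1LtOmega2)).2 hv
  · intro α β hαβ hβ
    have hα : α < (aleph 2).ord := hαβ.trans hβ
    have hA : ({ζ | ζ < (aleph 1).ord ∧
        f (chTr.{u1, u4} β) ζ ≤ f (chTr.{u1, u4} α) ζ}).Finite :=
      hfin (chTr.{u1, u4} α) (chTr.{u1, u4} β)
        ((chTr_lt_chTr.{u1, u4} hα hβ).2 hαβ) (chTr_lt_omega2.{u1, u4} hβ)
    apply Set.Finite.of_finite_image (f := chTr.{u1, u5})
    · apply hA.subset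
      rintro _ ⟨ξ, ⟨hξ, hle⟩, rfl⟩
      have hξ2 : ξ < (aleph 2).ord := hξ.trans chOmega1LtOmega2
      have htξ : chTr.{u1, u5} ξ < (aleph 1).ord := (chTr_lt_omega1_iff.{u1, u5} hξ2).2 hξ
      refine ⟨htξ, ?_⟩
      have hvβ : f (chTr.{u1, u4} β) (chTr.{u1, u5} ξ) < (aleph 1).ord :=
        hval _ (chTr_lt_omega2.{u1, u4} hβ) _ htξ
      have hvα : f (chTr.{u1, u4} α) (chTr.{u1, u5} ξ) < (aleph 1).ord :=
        hval _ (chTr_lt_omega2.{u1, u4} hα) _ htξ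
      exact (chTr_le_chTr.{u6, u1} (hvβ.trans chOmega1LtOmega2)
        (hvα.trans chOmega1LtOmega2)).1 hle
    · intro x hx y hy hxy
      have hx2 : x < (aleph 2).ord := hx.1.trans chOmega1LtOmega2
      have hy2 : y < (aleph 2).ord := hy.1.trans chOmega1LtOmega2
      rw [← chTr_chTr.{u1, u5} hx2, ← chTr_chTr.{u1, u5} hy2, hxy]

/-- Under the Chang Conjecture (ω₂,ω₁) ↠ (ω₁,ω) (via its combinatorial consequence:
every coloring of pairs from a club of ω₂ into ω₁ has a set of order type ω₁ on
which it takes values inside a fixed countable ordinal), there is no sequence of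
ω₂ many functions ω₁ → ω₁ increasing modulo finite. -/
theorem stmt3
    (hCC : ∀ C, IsClubIn C (aleph 2).ord →
      ∀ c : Ordinal → Ordinal → Ordinal,
        (∀ α β, α ∈ C → β ∈ C → α < β → c α β < (aleph 1).ord) →
        ∃ S ⊆ C, HasOrderType S (aleph 1).ord ∧
          ∃ ξ < (aleph 1).ord, ∀ α β, α ∈ S → β ∈ S → α < β → c α β < ξ) :
    ¬ ∃ f : Ordinal → Ordinal → Ordinal,
      (∀ α, α < (aleph 2).ord → ∀ ξ < (aleph 1).ord, f α ξ < (aleph 1).ord) ∧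
      (∀ α β, α < β → β < (aleph 2).ord →
        {ξ | ξ < (aleph 1).ord ∧ f β ξ ≤ f α ξ}.Finite) := by
  exact chGlue hCC
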